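/- Let d' > 0 and let c_1,...,c_n ≥ 0 with weights x'_1,...,x'_n ∈ [0,1] satisfy Σ_i min(c_i, d')·x'_i ≥ β·d' with β ≥ 8. For each i define its class cl(i) as the smallest nonnegative integer j with c_i ≥ 2^{−j}·d'. Suppose a set S ⊆ [n] satisfies, for every j ≥ 0, |{i ∈ S : cl(i) ≤ j}| ≥ ⌊Σ_{i: cl(i) ≤ j} x'_i⌋. Then Σ_{i∈S} c_i ≥ d'. -/

import Mathlib

open Finset

private lemma geom_aux (m J : ℕ) (h : m ≤ J) :
    (2:ℝ) ^ (-(m:ℤ)) = (2:ℝ) ^ (-(J:ℤ)) + ∑ j ∈ Finset.Ico m J, (2:ℝ) ^ (-((j:ℤ)+1)) := by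
  induction J, h using Nat.le_induction with
  | base => simp
  | succ J hJ ih =>
    rw [Finset.sum_Ico_succ_top hJ]
    have h2 : (2:ℝ) ^ (-(((J:ℕ)+1:ℕ):ℤ)) = (2:ℝ) ^ (-((J:ℤ))) / 2 := by
      push_cast
      rw [show -((J:ℤ)+1) = -(J:ℤ) - 1 by ring,
        zpow_sub₀ (by norm_num : (2:ℝ) ≠ 0), zpow_one]
    have h3 : (2:ℝ) ^ (-((J:ℤ)+1)) = (2:ℝ) ^ (-((J:ℤ))) / 2 := by
      rw [show -((J:ℤ)+1) = -(J:ℤ) - 1 by ring,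
        zpow_sub₀ (by norm_num : (2:ℝ) ≠ 0), zpow_one]
    push_cast at h2 ⊢
    linarith [ih]

/-- Core combinatorial claim of the capacitated-to-uncapacitated reduction,
specialized to a single point. -/
theorem capacitated_cover_feasible (n : ℕ) (d' : ℝ) (hd' : 0 < d')
    (c : Fin n → ℝ) (hc : ∀ i, 0 ≤ c i)
    (x' : Fin n → ℝ) (hx' : ∀ i, x' i ∈ Set.Icc (0:ℝ) 1)
    (β : ℝ) (hβ : 8 ≤ β)
    (hcov : β * d' ≤ ∑ i : Fin n, min (c i) d' * x' i)
    (cl : Fin n → ℕ)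
    (hcl : ∀ i, IsLeast {j : ℕ | (2:ℝ) ^ (-(j:ℤ)) * d' ≤ c i} (cl i))
    (S : Finset (Fin n))
    (hS : ∀ j : ℕ,
      (⌊∑ i ∈ Finset.univ.filter (fun i => cl i ≤ j), x' i⌋ : ℝ) ≤
        (S.filter (fun i => cl i ≤ j)).card) :
    d' ≤ ∑ i ∈ S, c i := by
  set f : Fin n → ℝ := fun i => (2:ℝ) ^ (-(cl i : ℤ)) with hf
  have hfpos : ∀ i, 0 < f i := fun i => zpow_pos (by norm_num) _
  have hfd : ∀ i, f i * d' ≤ c i := fun i => (hcl i).1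
  -- min (c i) d' ≤ 2 * (f i * d')
  have hmin : ∀ i, min (c i) d' ≤ 2 * (f i * d') := by
    intro i
    rcases Nat.eq_zero_or_pos (cl i) with h0 | hpos
    · have hfi : f i = 1 := by simp [hf, h0]
      rw [hfi]
      nlinarith [min_le_right (c i) d']
    · obtain ⟨k, hk⟩ : ∃ k, cl i = k + 1 := ⟨cl i - 1, (Nat.succ_pred_eq_of_pos hpos).symm⟩
      have hnot : ¬ ((2:ℝ) ^ (-(k:ℤ)) * d' ≤ c i) := by
        intro hle
        have := (hcl i).2 hle
        omega
      push_neg at hnot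
      have hfe : (2:ℝ) ^ (-(k:ℤ)) = 2 * f i := by
        show (2:ℝ) ^ (-(k:ℤ)) = 2 * (2:ℝ) ^ (-((cl i : ℕ):ℤ))
        rw [hk]
        push_cast
        rw [show -(k:ℤ) = 1 + (-((k:ℤ)+1)) by ring,
          zpow_add₀ (by norm_num : (2:ℝ) ≠ 0), zpow_one]
      rw [hfe] at hnot
      calc min (c i) d' ≤ c i := min_le_left _ _
        _ ≤ 2 * (f i * d') := by linarith
  -- Σ f i * x' i ≥ 4
  have hsum4 : (4:ℝ) ≤ ∑ i : Fin n, f i * x' i := by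
    have h1 : ∑ i : Fin n, min (c i) d' * x' i ≤ ∑ i : Fin n, 2 * (f i * d') * x' i := by
      apply Finset.sum_le_sum
      intro i _
      exact mul_le_mul_of_nonneg_right (hmin i) (hx' i).1
    have h2 : ∑ i : Fin n, 2 * (f i * d') * x' i = 2 * d' * ∑ i : Fin n, f i * x' i := by
      rw [Finset.mul_sum]; apply Finset.sum_congr rfl; intro i _; ring
    rw [h2] at h1
    have : 8 * d' ≤ 2 * d' * ∑ i : Fin n, f i * x' i := by nlinarith
    nlinarith
  -- Abel summation
  set J : ℕ := Finset.univ.sup cl with hJ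
  have hclJ : ∀ i : Fin n, cl i ≤ J := fun i => Finset.le_sup (Finset.mem_univ i)
  have abel : ∀ (T : Finset (Fin n)) (g : Fin n → ℝ),
      ∑ i ∈ T, f i * g i = (2:ℝ) ^ (-(J:ℤ)) * ∑ i ∈ T, g i
        + ∑ j ∈ Finset.range J, (2:ℝ) ^ (-((j:ℤ)+1)) *
            ∑ i ∈ T.filter (fun i => cl i ≤ j), g i := by
    intro T g
    have step1 : ∑ i ∈ T, f i * g i =
        ∑ i ∈ T, ((2:ℝ) ^ (-(J:ℤ)) * g i
          + ∑ j ∈ Finset.range J, (if cl i ≤ j then (2:ℝ) ^ (-((j:ℤ)+1)) * g i else 0)) := by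
      apply Finset.sum_congr rfl
      intro i _
      have hico : Finset.Ico (cl i) J = (Finset.range J).filter (fun j => cl i ≤ j) := by
        ext j
        simp [Finset.mem_Ico, Finset.mem_filter, Finset.mem_range]
        tauto
      have := geom_aux (cl i) J (hclJ i)
      show (2:ℝ) ^ (-((cl i : ℕ):ℤ)) * g i = _
      rw [this, hico, Finset.sum_filter, add_mul, Finset.sum_mul]
      congr 1
      apply Finset.sum_congr rfl
      intro j _
      split <;> simp
    rw [step1, Finset.sum_add_distrib, ← Finset.mul_sum]
    congr 1
    rw [Finset.sum_comm]
    apply Finset.sum_congr rfl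
    intro j _
    rw [Finset.mul_sum, Finset.sum_filter]
  -- apply to univ with x', and to S with 1
  have habelx := abel Finset.univ x'
  have habelS := abel S (fun _ => 1)
  simp only [Finset.sum_const, nsmul_eq_mul, mul_one] at habelS
  -- floor bounds
  have hfloor : ∀ j : ℕ,
      (∑ i ∈ Finset.univ.filter (fun i => cl i ≤ j), x' i) - 1
        ≤ ((S.filter (fun i => cl i ≤ j)).card : ℝ) := by
    intro j
    have := hS j
    have hlt := Int.sub_one_lt_floor (∑ i ∈ Finset.univ.filter (fun i => cl i ≤ j), x' i)
    linarith
  -- |S| bound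
  have hScard : (∑ i : Fin n, x' i) - 1 ≤ (S.card : ℝ) := by
    have h1 := hfloor J
    have h2 : Finset.univ.filter (fun i => cl i ≤ J) = (Finset.univ : Finset (Fin n)) := by
      apply Finset.filter_true_of_mem; intro i _; exact hclJ i
    have h3 : S.filter (fun i => cl i ≤ J) = S := by
      apply Finset.filter_true_of_mem; intro i _; exact hclJ i
    rw [h2, h3] at h1
    exact h1
  -- termwise comparison
  have hpow_pos : ∀ j : ℕ, (0:ℝ) < (2:ℝ) ^ (-((j:ℤ)+1)) := fun j => zpow_pos (by norm_num) _
  have hterm : ∑ j ∈ Finset.range J, (2:ℝ) ^ (-((j:ℤ)+1)) *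
        ((∑ i ∈ Finset.univ.filter (fun i => cl i ≤ j), x' i) - 1)
      ≤ ∑ j ∈ Finset.range J, (2:ℝ) ^ (-((j:ℤ)+1)) *
        ((S.filter (fun i => cl i ≤ j)).card : ℝ) := by
    apply Finset.sum_le_sum
    intro j _
    exact mul_le_mul_of_nonneg_left (hfloor j) (hpow_pos j).le
  -- geometric total
  have hgeo : (2:ℝ) ^ (-(J:ℤ)) + ∑ j ∈ Finset.range J, (2:ℝ) ^ (-((j:ℤ)+1)) = 1 := by
    have := geom_aux 0 J (Nat.zero_le J)
    simp only [Nat.cast_zero, neg_zero, zpow_zero] at this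
    rw [← Finset.range_eq_Ico] at this
    linarith
  -- expand the termwise sum
  have hexp : ∑ j ∈ Finset.range J, (2:ℝ) ^ (-((j:ℤ)+1)) *
        ((∑ i ∈ Finset.univ.filter (fun i => cl i ≤ j), x' i) - 1)
      = (∑ j ∈ Finset.range J, (2:ℝ) ^ (-((j:ℤ)+1)) *
          ∑ i ∈ Finset.univ.filter (fun i => cl i ≤ j), x' i)
        - ∑ j ∈ Finset.range J, (2:ℝ) ^ (-((j:ℤ)+1)) := by
    rw [← Finset.sum_sub_distrib]
    apply Finset.sum_congr rfl
    intro j _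
    ring
  -- combine: Σ_{i∈S} f i ≥ Σ f x' - 1 ≥ 3
  have hJpow_pos : (0:ℝ) < (2:ℝ) ^ (-(J:ℤ)) := zpow_pos (by norm_num) _
  have hkey : (3:ℝ) ≤ ∑ i ∈ S, f i := by
    have h1 : (2:ℝ) ^ (-(J:ℤ)) * ((∑ i : Fin n, x' i) - 1) ≤ (2:ℝ) ^ (-(J:ℤ)) * (S.card : ℝ) :=
      mul_le_mul_of_nonneg_left hScard hJpow_pos.le
    nlinarith [hterm, hexp, hgeo, habelx, habelS, hsum4]
  -- conclude
  have hfinal : ∑ i ∈ S, f i * d' ≤ ∑ i ∈ S, c i :=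
    Finset.sum_le_sum fun i _ => hfd i
  have : ∑ i ∈ S, f i * d' = (∑ i ∈ S, f i) * d' := by rw [Finset.sum_mul]
  nlinarith
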